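/- For integers 1 ≤ w ≤ a, we have ∑_{j=1}^{a-w} (w+j-1)/(w+j)^2 ≤ ln(a/w). -/

import Mathlib

open Finset Real

lemma log_step (x : ℝ) (hx : 1 ≤ x) : 1/(x+1) ≤ Real.log (x+1) - Real.log x := by
  have hx0 : 0 < x := by linarith
  have h1 : (0:ℝ) < x + 1 := by linarith
  have hd : Real.log (x/(x+1)) ≤ x/(x+1) - 1 :=
    Real.log_le_sub_one_of_pos (by positivity)
  have hlog : Real.log (x/(x+1)) = Real.log x - Real.log (x+1) :=
    Real.log_div (ne_of_gt hx0) (ne_of_gt h1)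
  have hfrac : x/(x+1) - 1 = -(1/(x+1)) := by field_simp; ring
  rw [hlog, hfrac] at hd
  linarith

lemma main_bound (w m : ℕ) (hw : 1 ≤ w) :
    ∑ j ∈ Finset.Icc 1 m, ((w : ℝ) + j - 1) / ((w : ℝ) + j) ^ 2
      ≤ Real.log (((w : ℝ) + m) / w) := by
  induction m with
  | zero =>
    have hw0 : (w:ℝ) ≠ 0 := by positivity
    simp [div_self hw0]
  | succ m ih =>
    rw [Finset.sum_Icc_succ_top (by omega : 1 ≤ m + 1)]
    set x : ℝ := (w : ℝ) + m with hxdef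
    have hx1 : 1 ≤ x := by
      have : (1:ℝ) ≤ (w:ℝ) := by exact_mod_cast hw
      have : (0:ℝ) ≤ (m:ℝ) := Nat.cast_nonneg m
      simp only [hxdef]; linarith [(show (1:ℝ) ≤ (w:ℝ) from by exact_mod_cast hw)]
    have hx0 : 0 < x := by linarith
    have hterm : ((w : ℝ) + (m+1 : ℕ) - 1) / ((w : ℝ) + (m+1 : ℕ)) ^ 2
        ≤ Real.log (x+1) - Real.log x := by
      have hc : ((w : ℝ) + (m+1 : ℕ) - 1) = x := by push_cast; ring
      have hc2 : ((w : ℝ) + (m+1 : ℕ)) = x + 1 := by push_cast; ring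
      rw [hc, hc2]
      calc x / (x+1)^2 ≤ (x+1) / (x+1)^2 := by gcongr; linarith
        _ = 1/(x+1) := by field_simp
        _ ≤ Real.log (x+1) - Real.log x := log_step x hx1
    have hw0 : (0:ℝ) < (w:ℝ) := by exact_mod_cast hw
    have hlog1 : Real.log (((w : ℝ) + m) / w) = Real.log x - Real.log w := by
      rw [Real.log_div (ne_of_gt hx0) (ne_of_gt hw0)]
    have hlog2 : Real.log (((w : ℝ) + (m+1:ℕ)) / w) = Real.log (x+1) - Real.log w := by
      have hc2 : ((w : ℝ) + (m+1 : ℕ)) = x + 1 := by push_cast; ring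
      rw [hc2, Real.log_div (by positivity) (ne_of_gt hw0)]
    push_cast
    push_cast at hterm ih hlog1 hlog2 ⊢
    linarith

theorem anchorhash_variance_bound (w a : ℕ) (hw : 1 ≤ w) (hwa : w ≤ a) :
    ∑ j ∈ Finset.Icc 1 (a - w), ((w : ℝ) + j - 1) / ((w : ℝ) + j) ^ 2
      ≤ Real.log ((a : ℝ) / (w : ℝ)) := by
  obtain ⟨m, rfl⟩ : ∃ m, a = w + m := ⟨a - w, by omega⟩
  have h1 : w + m - w = m := by omega
  have h2 : ((w + m : ℕ) : ℝ) = (w : ℝ) + m := by push_cast; ring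
  rw [h1, h2]
  exact main_bound w m hw
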